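/- Let S consist of 2n points given as n pairs {p_i, q_i} in a metric space (n ≥ 1), let T be a minimum spanning tree of S, and let h be a maximum-weight edge of T. Then there exists a feasible coloring S = R ∪ B with max(btCost(R), btCost(B)) ≤ 9 · w(h), where w(h) is the length of the edge h. -/

import Mathlib

variable {α : Type*} [MetricSpace α] [DecidableEq α]

/-- Two points are connected via the edge set `E` (edges usable in both directions). -/
def EdgeConn (E : Finset (α × α)) (x y : α) : Prop :=
  Relation.ReflTransGen (fun a b => (a, b) ∈ E ∨ (b, a) ∈ E) x y

/-- `E` is (the edge set of) a spanning tree of the complete graph on the finite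
point set `X`. -/
def IsSpanningTreeOn (X : Finset α) (E : Finset (α × α)) : Prop :=
  (∀ e ∈ E, e.1 ∈ X ∧ e.2 ∈ X) ∧ E.card + 1 = X.card ∧
    ∀ x ∈ X, ∀ y ∈ X, EdgeConn E x y

/-- The bottleneck spanning tree cost of `X`: the least `c ≥ 0` such that some
spanning tree on `X` has all edge lengths at most `c`. -/
noncomputable def btCost (X : Finset α) : ℝ :=
  sInf {c | 0 ≤ c ∧ ∃ E : Finset (α × α), IsSpanningTreeOn X E ∧ ∀ e ∈ E, dist e.1 e.2 ≤ c}


set_option linter.unusedSectionVars false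
set_option linter.unusedVariables false
set_option maxHeartbeats 1000000

attribute [local instance] Classical.propDecidable

lemma chain'_zip_tail {β : Type*} {R : β → β → Prop} :
    ∀ {l : List β}, List.Chain' R l → ∀ e ∈ l.zip l.tail, R e.1 e.2 := by
  intro l
  induction l with
  | nil => intro _ e he; simp at he
  | cons a t ih =>
    intro hch e he
    cases t with
    | nil => simp at he
    | cons b t' =>
      simp only [List.Chain'] at hch
      rw [List.isChain_cons_cons] at hch
      simp only [List.tail_cons, List.zip_cons_cons, List.mem_cons] at he
      rcases he with rfl | he
      · exact hch.1
      · exact ih hch.2 e he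

lemma edgeConn_symm {E : Finset (α × α)} {x y : α} (h : EdgeConn E x y) : EdgeConn E y x := by
  refine (@Relation.ReflTransGen.symmetric _ _ ⟨?_⟩).symm _ _ h
  intro a b hab
  exact hab.symm

lemma btCost_le_of_chain (l : List α) (hne : l ≠ []) (hnd : l.Nodup) (c : ℝ) (hc : 0 ≤ c)
    (hch : List.Chain' (fun x y => dist x y ≤ c) l) : btCost l.toFinset ≤ c := by
  classical
  set E : Finset (α × α) := (l.zip l.tail).toFinset with hE
  have hzipnd : (l.zip l.tail).Nodup := by
    have hmap : (l.zip l.tail).map Prod.snd = l.tail :=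
      List.map_snd_zip (by simpa using Nat.sub_le l.length 1)
    have h2 : l.tail.Nodup := hnd.tail
    rw [← hmap] at h2
    exact h2.of_map _
  have hlen : (l.zip l.tail).length = l.length - 1 := by
    simp [List.length_zip]
  have hEcard : E.card = l.length - 1 := by
    rw [hE, List.toFinset_card_of_nodup hzipnd, hlen]
  have hmemzip : ∀ e ∈ l.zip l.tail, e.1 ∈ l ∧ e.2 ∈ l := by
    intro e he
    have := List.of_mem_zip he
    exact ⟨this.1, List.mem_of_mem_tail this.2⟩
  have hgetzip : ∀ (k : ℕ) (hk : k + 1 < l.length),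
      (l.get ⟨k, by omega⟩, l.get ⟨k+1, hk⟩) ∈ l.zip l.tail := by
    intro k hk
    have hk' : k < (l.zip l.tail).length := by rw [hlen]; omega
    have hmem : (l.zip l.tail)[k]'hk' ∈ l.zip l.tail := List.getElem_mem hk'
    have h2 : k < l.tail.length := by rw [List.length_tail]; omega
    have hzg : (l.zip l.tail)[k]'hk' = (l[k]'(by omega), l.tail[k]'h2) :=
      List.getElem_zip
    have htl : l.tail[k]'h2 = l[k+1]'hk := by
      simp [List.getElem_tail]
    rw [hzg, htl] at hmem
    simpa using hmem
  have hconnhead : ∀ (k : ℕ) (hk : k < l.length), EdgeConn E (l.get ⟨0, by omega⟩) (l.get ⟨k, hk⟩) := by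
    intro k
    induction k with
    | zero => intro hk; exact Relation.ReflTransGen.refl
    | succ m ih =>
      intro hk
      have hm : m < l.length := by omega
      refine (ih hm).tail ?_
      left
      rw [hE, List.mem_toFinset]
      exact hgetzip m hk
  have hstree : IsSpanningTreeOn l.toFinset E := by
    refine ⟨?_, ?_, ?_⟩
    · intro e he
      rw [hE, List.mem_toFinset] at he
      have := hmemzip e he
      simp [List.mem_toFinset, this.1, this.2]
    · rw [hEcard, List.toFinset_card_of_nodup hnd]
      have : 1 ≤ l.length := List.length_pos_iff.2 hne
      omega
    · intro x hx y hy
      rw [List.mem_toFinset, List.mem_iff_get] at hx hy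
      obtain ⟨ix, rfl⟩ := hx
      obtain ⟨iy, rfl⟩ := hy
      exact (edgeConn_symm (hconnhead ix.1 ix.2)).trans (hconnhead iy.1 iy.2)
  have hmem : c ∈ {c | 0 ≤ c ∧ ∃ E : Finset (α × α), IsSpanningTreeOn l.toFinset E ∧
      ∀ e ∈ E, dist e.1 e.2 ≤ c} := by
    refine ⟨hc, E, hstree, ?_⟩
    intro e he
    rw [hE, List.mem_toFinset] at he
    exact chain'_zip_tail hch e he
  exact csInf_le ⟨0, fun x hx => hx.1⟩ hmem

def rww (w : ℝ) (Y : Finset α) (x y : α) : Prop := x ∈ Y ∧ y ∈ Y ∧ dist x y ≤ w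

def connw (w : ℝ) (Y : Finset α) (x y : α) : Prop := Relation.ReflTransGen (rww w Y) x y

lemma rww_symm {w : ℝ} {Y : Finset α} {x y : α} (h : rww w Y x y) : rww w Y y x :=
  ⟨h.2.1, h.1, by rw [dist_comm]; exact h.2.2⟩

lemma connw_symm {w : ℝ} {Y : Finset α} {x y : α} (h : connw w Y x y) : connw w Y y x :=
  (@Relation.ReflTransGen.symmetric _ _ ⟨fun _ _ hs => rww_symm hs⟩).symm _ _ h

lemma connw_mono {w : ℝ} {Y Z : Finset α} (hYZ : Y ⊆ Z) {x y : α} (h : connw w Y x y) :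
    connw w Z x y :=
  Relation.ReflTransGen.mono (fun _ _ hs => ⟨hYZ hs.1, hYZ hs.2.1, hs.2.2⟩) _ _ h

lemma reach {w : ℝ} {X : Finset α} {z a : α} (h : connw w X z a) (hne : z ≠ a) :
    ∃ u ∈ X.erase a, connw w (X.erase a) z u ∧ dist u a ≤ w := by
  revert hne
  induction h using Relation.ReflTransGen.head_induction_on with
  | refl => intro hne; exact absurd rfl hne
  | @head x c hstep hrest ih =>
    intro hne
    by_cases hc : c = a
    · subst hc
      exact ⟨x, Finset.mem_erase.2 ⟨hne, hstep.1⟩, Relation.ReflTransGen.refl, hstep.2.2⟩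
    · obtain ⟨u, hu, hconn, hd⟩ := ih hc
      exact ⟨u, hu, hconn.head
        ⟨Finset.mem_erase.2 ⟨hne, hstep.1⟩, Finset.mem_erase.2 ⟨hc, hstep.2.1⟩, hstep.2.2⟩, hd⟩

lemma comp_conn_aux {w : ℝ} {Y : Finset α} {y0 : α} {x : α} (h : connw w Y y0 x) :
    connw w (Y.filter (fun z => connw w Y y0 z)) y0 x := by
  induction h with
  | refl => exact Relation.ReflTransGen.refl
  | @tail v c hzv hstep ih =>
    have hvC : v ∈ Y.filter (fun z => connw w Y y0 z) := by
      classical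
      exact Finset.mem_filter.2 ⟨hstep.1, hzv⟩
    have hcC : c ∈ Y.filter (fun z => connw w Y y0 z) := by
      classical
      exact Finset.mem_filter.2 ⟨hstep.2.1, hzv.tail hstep⟩
    exact ih.tail ⟨hvC, hcC, hstep.2.2⟩

lemma comp_conn {w : ℝ} {Y : Finset α} {y0 : α} :
    ∀ x ∈ Y.filter (fun z => connw w Y y0 z), ∀ y ∈ Y.filter (fun z => connw w Y y0 z),
      connw w (Y.filter (fun z => connw w Y y0 z)) x y := by
  classical
  intro x hx y hy
  have hx' := (Finset.mem_filter.1 hx).2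
  have hy' := (Finset.mem_filter.1 hy).2
  exact (connw_symm (comp_conn_aux hx')).trans (comp_conn_aux hy')

lemma confine {w : ℝ} {Y : Finset α} {y0 : α} {z u : α} (hz : ¬ connw w Y y0 z)
    (h : connw w Y z u) :
    connw w (Y.filter (fun v => ¬ connw w Y y0 v)) z u ∧ ¬ connw w Y y0 u := by
  classical
  induction h with
  | refl => exact ⟨Relation.ReflTransGen.refl, hz⟩
  | @tail v c hzv hstep ih =>
    obtain ⟨ihc, ihn⟩ := ih
    have hcn : ¬ connw w Y y0 c := by
      intro hcon
      exact ihn (hcon.tail (rww_symm hstep))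
    refine ⟨ihc.tail ⟨Finset.mem_filter.2 ⟨hstep.1, ihn⟩, Finset.mem_filter.2 ⟨hstep.2.1, hcn⟩,
      hstep.2.2⟩, hcn⟩

lemma sekanina {w : ℝ} (hw : 0 ≤ w) : ∀ (m : ℕ) (X : Finset α), X.card = m →
    ∀ a b, a ∈ X → b ∈ X → a ≠ b →
    (∀ x ∈ X, ∀ y ∈ X, connw w X x y) →
    ∃ l : List α, l.Nodup ∧ l.toFinset = X ∧ l.head? = some a ∧ l.getLast? = some b ∧
      List.Chain' (fun x y => dist x y ≤ 3*w) l ∧ (∀ v ∈ l.tail.head?, dist a v ≤ 2*w) := by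
  classical
  intro m
  induction m using Nat.strong_induction_on with
  | _ m IH =>
  intro X hXm a b ha hb hab hconn
  set Y : Finset α := X.erase a with hY
  have hbY : b ∈ Y := Finset.mem_erase.2 ⟨Ne.symm hab, hb⟩
  have hYcard : Y.card + 1 = m := by
    rw [hY, Finset.card_erase_of_mem ha, hXm]
    have : 1 ≤ X.card := Finset.card_pos.2 ⟨a, ha⟩
    omega
  by_cases hcase : ∀ y ∈ Y, connw w Y b y
  · -- CASE 1 : Y is a single component containing b
    have hYconn : ∀ x ∈ Y, ∀ y ∈ Y, connw w Y x y := by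
      intro x hx y hy
      have hC : Y.filter (fun z => connw w Y b z) = Y := by
        apply Finset.filter_true_of_mem
        intro z hz; exact hcase z hz
      have := comp_conn (w := w) (Y := Y) (y0 := b) x (by rw [hC]; exact hx) y
        (by rw [hC]; exact hy)
      rwa [hC] at this
    obtain ⟨u, huY, huconn, hud⟩ := reach (hconn b hb a ha) (Ne.symm hab)
    have huY' : u ∈ Y := huY
    -- either we find an entry point c ≠ b with dist a c ≤ 2w, or X = {a, b}
    have hmain : (∃ c ∈ Y, c ≠ b ∧ dist a c ≤ 2*w) ∨ (∀ y ∈ Y, y = b) := by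
      by_cases h1 : ∃ c ∈ Y, dist c a ≤ w ∧ c ≠ b
      · obtain ⟨c, hcY, hcd, hcb⟩ := h1
        left
        refine ⟨c, hcY, hcb, ?_⟩
        rw [dist_comm] at hcd
        linarith
      · -- then u = b, so dist b a ≤ w
        push_neg at h1
        have hub : u = b := by
          by_contra hne
          exact hne (h1 u huY' hud)
        rw [hub] at hud
        by_cases hY1 : ∀ y ∈ Y, y = b
        · right; exact hY1
        · push_neg at hY1
          obtain ⟨y, hyY, hyb⟩ := hY1
          obtain ⟨s, hsYe, _, hsd⟩ := reach (hYconn y hyY b hbY) hyb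
          left
          have hsY : s ∈ Y := Finset.mem_of_mem_erase hsYe
          have hsb : s ≠ b := (Finset.mem_erase.1 hsYe).1
          refine ⟨s, hsY, hsb, ?_⟩
          have : dist a s ≤ dist a b + dist b s := dist_triangle a b s
          rw [dist_comm] at hud hsd
          linarith
    rcases hmain with ⟨c, hcY, hcb, hca⟩ | hY1
    · obtain ⟨l', hnd, htf, hhd, hlast, hch, _⟩ :=
        IH Y.card (by omega) Y rfl c b hcY hbY hcb hYconn
      refine ⟨a :: l', ?_, ?_, rfl, ?_, ?_, ?_⟩
      · refine List.nodup_cons.2 ⟨?_, hnd⟩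
        intro hmem
        have : a ∈ Y := by rw [← htf]; exact List.mem_toFinset.2 hmem
        exact (Finset.notMem_erase a X) (hY ▸ this)
      · rw [List.toFinset_cons, htf, hY, Finset.insert_erase ha]
      · rw [List.getLast?_cons, hlast]
        rfl
      · simp only [List.Chain']
        rw [List.isChain_cons]
        refine ⟨?_, hch⟩
        intro v hv
        rw [hhd, Option.mem_def, Option.some.injEq] at hv
        subst hv
        linarith
      · intro v hv
        rw [List.tail_cons, hhd, Option.mem_def, Option.some.injEq] at hv
        subst hv
        exact hca
    · -- X = {a, b}
      have hYb : Y = {b} := by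
        apply Finset.eq_singleton_iff_unique_mem.2
        exact ⟨hbY, hY1⟩
      have hdab : dist a b ≤ w := by
        have hub := hY1 u huY'
        rw [hub] at hud
        rw [dist_comm] at hud
        exact hud
      refine ⟨[a, b], by simp [hab], ?_, rfl, rfl, ?_, ?_⟩
      · simp only [List.toFinset_cons, List.toFinset_nil]
        rw [show (insert b (∅:Finset α)) = ({b} : Finset α) from rfl, ← hYb]
        exact Finset.insert_erase ha
      · refine List.isChain_cons_cons.2 ⟨by linarith, List.isChain_singleton b⟩
      · intro v hv
        simp only [List.tail_cons, List.head?_cons, Option.mem_def, Option.some.injEq] at hv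
        subst hv
        linarith
  · -- CASE 2 : there is a component of Y not containing b
    push_neg at hcase
    obtain ⟨y0, hy0Y, hy0b⟩ := hcase
    set C : Finset α := Y.filter (fun v => connw w Y y0 v) with hC
    have hy0C : y0 ∈ C := Finset.mem_filter.2 ⟨hy0Y, Relation.ReflTransGen.refl⟩
    have hbC : b ∉ C := by
      intro hmem
      exact hy0b (connw_symm (Finset.mem_filter.1 hmem).2)
    have haY : a ∉ Y := Finset.notMem_erase a X
    have haC : a ∉ C := fun hmem => haY (Finset.mem_filter.1 hmem).1
    have hCY : C ⊆ Y := Finset.filter_subset _ _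
    have hCX : C ⊆ X := hCY.trans (Finset.erase_subset a X)
    set X' : Finset α := X \ C with hX'
    have haX' : a ∈ X' := Finset.mem_sdiff.2 ⟨ha, haC⟩
    have hbX' : b ∈ X' := Finset.mem_sdiff.2 ⟨hb, hbC⟩
    have hX'card : X'.card < m := by
      rw [hX', Finset.card_sdiff_of_subset hCX, hXm]
      have h1 : 1 ≤ C.card := Finset.card_pos.2 ⟨y0, hy0C⟩
      have h2 : C.card ≤ X.card := Finset.card_le_card hCX
      omega
    -- X' is connected
    have hX'conn : ∀ x ∈ X', ∀ y ∈ X', connw w X' x y := by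
      have key : ∀ z ∈ X', connw w X' z a := by
        intro z hz
        by_cases hza : z = a
        · subst hza; exact Relation.ReflTransGen.refl
        · have hzX : z ∈ X := (Finset.mem_sdiff.1 hz).1
          have hzC : z ∉ C := (Finset.mem_sdiff.1 hz).2
          have hzY : z ∈ Y := Finset.mem_erase.2 ⟨hza, hzX⟩
          have hzn : ¬ connw w Y y0 z := fun hcon => hzC (Finset.mem_filter.2 ⟨hzY, hcon⟩)
          obtain ⟨u, huY, huc, hud⟩ := reach (hconn z hzX a ha) hza
          obtain ⟨hcf, hun⟩ := confine hzn huc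
          have hsub : Y.filter (fun v => ¬ connw w Y y0 v) ⊆ X' := by
            intro v hv
            obtain ⟨hvY, hvn⟩ := Finset.mem_filter.1 hv
            exact Finset.mem_sdiff.2 ⟨Finset.mem_of_mem_erase hvY,
              fun hmem => hvn (Finset.mem_filter.1 hmem).2⟩
          have huX' : u ∈ X' := Finset.mem_sdiff.2 ⟨Finset.mem_of_mem_erase huY,
            fun hmem => hun (Finset.mem_filter.1 hmem).2⟩
          exact (connw_mono hsub hcf).tail ⟨huX', haX', hud⟩
      intro x hx y hy
      exact (key x hx).trans (connw_symm (key y hy))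
    obtain ⟨l', hnd', htf', hhd', hlast', hch', hsec'⟩ :=
      IH X'.card hX'card X' rfl a b haX' hbX' hab hX'conn
    -- split l' = a :: t
    obtain ⟨l'', rfl⟩ : ∃ t, l' = a :: t := by
      cases l' with
      | nil => simp at hhd'
      | cons x t =>
        simp only [List.head?_cons, Option.some.injEq] at hhd'
        exact ⟨t, by rw [hhd']⟩
    have htne : l'' ≠ [] := by
      intro h
      subst h
      simp only [List.getLast?_cons, List.getLast?_nil, Option.getD_none,
        Option.some.injEq] at hlast'
      exact hab hlast'
    -- entry point u' into C
    obtain ⟨u', hu'Y, hu'c, hu'd⟩ := reach (hconn y0 (hCX hy0C) a ha) (fun h => haY (h ▸ hy0Y))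
    have hu'C : u' ∈ C := Finset.mem_filter.2 ⟨hu'Y, hu'c⟩
    -- segment through C: head s₀ with dist a s₀ ≤ 2w, last u', covers C
    have hseg : ∃ seg : List α, seg.Nodup ∧ seg.toFinset = C ∧ seg ≠ [] ∧
        seg.getLast? = some u' ∧ List.Chain' (fun x y => dist x y ≤ 3*w) seg ∧
        (∀ v ∈ seg.head?, dist a v ≤ 2*w) := by
      by_cases hC1 : ∀ v ∈ C, v = u'
      · refine ⟨[u'], List.nodup_singleton u', ?_, by simp, rfl, List.isChain_singleton u', ?_⟩
        · simp only [List.toFinset_cons, List.toFinset_nil]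
          exact (Finset.eq_singleton_iff_unique_mem.2 ⟨hu'C, hC1⟩).symm
        · intro v hv
          simp only [List.head?_cons, Option.mem_def, Option.some.injEq] at hv
          subst hv
          rw [dist_comm] at hu'd
          linarith
      · push_neg at hC1
        obtain ⟨v0, hv0C, hv0u⟩ := hC1
        have hCconn : ∀ x ∈ C, ∀ y ∈ C, connw w C x y := comp_conn
        obtain ⟨x', hx'e, _, hx'd⟩ := reach (hCconn v0 hv0C u' hu'C) hv0u
        have hx'C : x' ∈ C := Finset.mem_of_mem_erase hx'e
        have hx'u : x' ≠ u' := (Finset.mem_erase.1 hx'e).1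
        have hCcard : C.card < m := by
          have : C.card ≤ Y.card := Finset.card_le_card hCY
          omega
        obtain ⟨seg, hsnd, hstf, hshd, hslast, hsch, _⟩ :=
          IH C.card hCcard C rfl x' u' hx'C hu'C hx'u hCconn
        have hsegne : seg ≠ [] := by intro h; rw [h] at hshd; simp at hshd
        refine ⟨seg, hsnd, hstf, hsegne, hslast, hsch, ?_⟩
        intro v hv
        rw [hshd, Option.mem_def, Option.some.injEq] at hv
        rw [← hv]
        have h1 : dist a x' ≤ dist a u' + dist u' x' := dist_triangle a u' x'
        have h2 : dist u' a = dist a u' := dist_comm u' a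
        have h3 : dist x' u' = dist u' x' := dist_comm x' u'
        linarith
    obtain ⟨seg, hsnd, hstf, hsegne, hslast, hsch, hshead⟩ := hseg
    obtain ⟨s₀, hs₀⟩ : ∃ s₀, seg.head? = some s₀ := by
      cases seg with
      | nil => exact absurd rfl hsegne
      | cons x t => exact ⟨x, rfl⟩
    have hs₀a : dist a s₀ ≤ 2*w := hshead s₀ hs₀
    -- head of l'' = v with dist a v ≤ 2w
    obtain ⟨v, hv⟩ : ∃ v, l''.head? = some v := by
      cases l'' with
      | nil => exact absurd rfl htne
      | cons x t => exact ⟨x, rfl⟩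
    have hva : dist a v ≤ 2*w := hsec' v (by rw [List.tail_cons]; exact hv)
    -- the C part is disjoint from l' = a :: l''
    have hdisj : ∀ x ∈ seg, x ∉ a :: l'' := by
      intro x hx hmem
      have hxC : x ∈ C := by rw [← hstf]; exact List.mem_toFinset.2 hx
      have hxX' : x ∈ X' := by rw [← htf']; exact List.mem_toFinset.2 hmem
      exact (Finset.mem_sdiff.1 hxX').2 hxC
    refine ⟨a :: (seg ++ l''), ?_, ?_, rfl, ?_, ?_, ?_⟩
    · rw [List.nodup_cons, List.nodup_append]
      refine ⟨?_, hsnd, hnd'.of_cons, ?_⟩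
      · intro hmem
        rw [List.mem_append] at hmem
        rcases hmem with hmem | hmem
        · exact haC (by rw [← hstf]; exact List.mem_toFinset.2 hmem)
        · exact (List.nodup_cons.1 hnd').1 hmem
      · intro x hx y hy hxy
        subst hxy
        exact hdisj _ hx (List.mem_cons_of_mem a hy)
    · have h1 : (a :: (seg ++ l'')).toFinset = insert a (seg.toFinset ∪ l''.toFinset) := by
        simp
      rw [h1, hstf]
      have h2 : insert a l''.toFinset = X' := by
        rw [← htf']; simp
      ext x
      simp only [Finset.mem_insert, Finset.mem_union]
      constructor
      · rintro (rfl | hx | hx)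
        · exact ha
        · exact hCX hx
        · have hx' : x ∈ X' := by rw [← h2]; exact Finset.mem_insert_of_mem hx
          exact (Finset.mem_sdiff.1 hx').1
      · intro hx
        by_cases hxC : x ∈ C
        · right; left; exact hxC
        · have hx' : x ∈ X' := Finset.mem_sdiff.2 ⟨hx, hxC⟩
          rw [← h2] at hx'
          rcases Finset.mem_insert.1 hx' with rfl | hx''
          · left; rfl
          · right; right; exact hx''
    · rw [List.getLast?_cons, List.getLast?_append]
      have hzl : l''.getLast? = some (l''.getLast htne) := List.getLast?_eq_getLast htne
      rw [List.getLast?_cons, hzl] at hlast'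
      simp only [Option.getD_some, Option.some.injEq] at hlast'
      rw [hzl, hlast']
      rfl
    · simp only [List.Chain']
      rw [List.isChain_cons]
      constructor
      · intro y hy
        rw [List.head?_append, hs₀] at hy
        simp only [Option.or_some, Option.some_or, Option.mem_def, Option.some.injEq] at hy
        subst hy
        linarith
      · refine List.IsChain.append hsch ?_ ?_
        · exact (List.isChain_cons.1 hch').2
        · intro x hx y hy
          rw [hslast, Option.mem_def, Option.some.injEq] at hx
          rw [hv, Option.mem_def, Option.some.injEq] at hy
          rw [← hx, ← hy]
          have h1 : dist u' v ≤ dist u' a + dist a v := dist_triangle u' a v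
          have h2 : dist u' a = dist a u' := dist_comm u' a
          linarith
    · intro y hy
      rw [List.tail_cons, List.head?_append, hs₀] at hy
      simp only [Option.or_some, Option.some_or, Option.mem_def, Option.some.injEq] at hy
      subst hy
      exact hs₀a

lemma perm_two_involutions_coloring {β : Type*} [Fintype β] [DecidableEq β] [LinearOrder β]
    (μ π : Equiv.Perm β) (hμi : μ * μ = 1) (hπi : π * π = 1)
    (hμf : ∀ p, μ p ≠ p) (hπf : ∀ p, π p ≠ p) :
    ∃ c : β → Bool, (∀ p, c (μ p) = !c p) ∧ (∀ p, c (π p) = !c p) := by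
  classical
  set g : Equiv.Perm β := μ * π with hg
  have hπinv : π⁻¹ = π := inv_eq_of_mul_eq_one_right hπi
  have hμinv : μ⁻¹ = μ := inv_eq_of_mul_eq_one_right hμi
  have hginv : g⁻¹ = π * μ := by rw [hg, mul_inv_rev, hπinv, hμinv]
  have hconj : ∀ t : ℤ, π * g ^ t * π = g ^ (-t) := by
    intro t
    have h1 : (MulAut.conj π) (g ^ t) = ((MulAut.conj π) g) ^ t := map_zpow _ _ _
    have h2 : (MulAut.conj π) g = g⁻¹ := by
      simp only [MulAut.conj_apply, hπinv]
      rw [hginv, hg]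
      calc π * (μ * π) * π = π * μ * (π * π) := by group
      _ = π * μ := by rw [hπi, mul_one]
    have h3 : (MulAut.conj π) (g ^ t) = g⁻¹ ^ t := by rw [h1, h2]
    simp only [MulAut.conj_apply, hπinv] at h3
    rw [h3, ← zpow_neg_one, ← zpow_mul]
    ring_nf
  have hμg : μ = g * π := by
    rw [hg]
    calc μ = μ * (π * π) := by rw [hπi, mul_one]
    _ = μ * π * π := by group
  -- key : π p is never on the g-cycle of p
  have hkey : ∀ p : β, ¬ g.SameCycle p (π p) := by
    rintro p ⟨i, hi⟩
    have happ : ∀ t : ℤ, π ((g ^ t) p) = (g ^ (i - t)) p := by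
      intro t
      have h1 : π ((g ^ t) p) = (π * g ^ t * π) (π p) := by
        simp [Equiv.Perm.mul_apply]
        congr 1
        have : π (π p) = p := by
          have := congrArg (fun σ : Equiv.Perm β => σ p) hπi
          simpa [Equiv.Perm.mul_apply] using this
        rw [this]
      rw [h1, hconj]
      rw [← hi, ← Equiv.Perm.mul_apply, ← zpow_add]
      congr 1
      ring
    rcases Int.even_or_odd i with ⟨t, ht⟩ | ⟨t, ht⟩
    · -- i = 2t : π fixes g^t p
      have := happ t
      rw [show i - t = t by omega] at this
      exact hπf _ this
    · -- i = 2t+1 : μ fixes g^(t+1) p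
      have h1 : μ ((g ^ (t+1)) p) = (g ^ (t+1)) p := by
        have h2 : μ ((g ^ (t+1)) p) = g (π ((g ^ (t+1)) p)) := by
          rw [hμg]; simp [Equiv.Perm.mul_apply]
        rw [h2, happ (t+1), ← Equiv.Perm.mul_apply, ← zpow_one_add]
        congr 2
        omega
      exact hμf _ h1
  -- the union component of p
  set U : β → Finset β := fun p =>
    Finset.univ.filter (fun q => g.SameCycle p q ∨ g.SameCycle (π p) q) with hU
  have hself : ∀ p, p ∈ U p := by
    intro p
    simp only [hU, Finset.mem_filter, Finset.mem_univ, true_and]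
    exact Or.inl (Equiv.Perm.SameCycle.refl g p)
  have hππ : ∀ p : β, π (π p) = p := by
    intro p
    have := congrArg (fun σ : Equiv.Perm β => σ p) hπi
    simpa [Equiv.Perm.mul_apply] using this
  have hUπ : ∀ p, U (π p) = U p := by
    intro p
    simp only [hU]
    apply Finset.filter_congr
    intro q _
    rw [hππ p]
    exact or_comm
  have hπg : ∀ x : β, π (g x) = g⁻¹ (π x) := by
    intro x
    have := hconj 1
    simp only [zpow_one] at this
    have h1 : π (g (π (π x))) = g⁻¹ (π x) := by
      have := congrArg (fun σ : Equiv.Perm β => σ (π x)) this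
      simpa [Equiv.Perm.mul_apply, zpow_neg_one] using this
    rwa [hππ x] at h1
  have hUg : ∀ p, U (g p) = U p := by
    intro p
    simp only [hU]
    apply Finset.filter_congr
    intro q _
    rw [hπg p, Equiv.Perm.sameCycle_apply_left]
    exact or_congr_right Equiv.Perm.sameCycle_symm_apply_left
  have hne : ∀ p, (U p).Nonempty := fun p => ⟨p, hself p⟩
  set rep : β → β := fun p => (U p).min' (hne p) with hrep
  have hrepπ : ∀ p, rep (π p) = rep p := by
    intro p
    simp only [hrep]
    congr 1
    exact hUπ p
  have hrepg : ∀ p, rep (g p) = rep p := by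
    intro p
    simp only [hrep]
    congr 1
    exact hUg p
  have hrepU : ∀ p, rep p ∈ U p := fun p => (U p).min'_mem (hne p)
  set c : β → Bool := fun p => decide (g.SameCycle (rep p) p) with hc
  refine ⟨c, ?_, ?_⟩
  case refine_2 =>
    intro p
    have hr := hrepU p
    simp only [hU, Finset.mem_filter, Finset.mem_univ, true_and] at hr
    have hnot : ¬ (g.SameCycle (rep p) p ∧ g.SameCycle (rep p) (π p)) := by
      rintro ⟨h1, h2⟩
      exact hkey p (h1.symm.trans h2)
    by_cases h1 : g.SameCycle (rep p) p
    · have h2 : ¬ g.SameCycle (rep p) (π p) := fun h => hnot ⟨h1, h⟩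
      simp [hc, hrepπ p, h1, h2]
    · have h2 : g.SameCycle (rep p) (π p) := by
        rcases hr with h | h
        · exact absurd h.symm h1
        · exact h.symm
      simp [hc, hrepπ p, h1, h2]
  case refine_1 =>
    intro p
    have hμp : μ p = g (π p) := by rw [hμg]; simp [Equiv.Perm.mul_apply]
    have hcc : c (μ p) = c (π p) := by
      rw [hμp]
      simp only [hc, hrepg (π p)]
      congr 1
      apply propext
      exact Equiv.Perm.sameCycle_apply_right
    rw [hcc]
    -- now same as refine_2
    have hr := hrepU p
    simp only [hU, Finset.mem_filter, Finset.mem_univ, true_and] at hr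
    have hnot : ¬ (g.SameCycle (rep p) p ∧ g.SameCycle (rep p) (π p)) := by
      rintro ⟨h1, h2⟩
      exact hkey p (h1.symm.trans h2)
    by_cases h1 : g.SameCycle (rep p) p
    · have h2 : ¬ g.SameCycle (rep p) (π p) := fun h => hnot ⟨h1, h⟩
      simp [hc, hrepπ p, h1, h2]
    · have h2 : g.SameCycle (rep p) (π p) := by
        rcases hr with h | h
        · exact absurd h.symm h1
        · exact h.symm
      simp [hc, hrepπ p, h1, h2]

lemma filter_range_props (p : ℕ → Bool) : ∀ N : ℕ,
    List.Chain' (fun a b => p a = true ∧ p b = true ∧ a < b ∧ b < N ∧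
      ∀ t, a < t → t < b → p t = false) ((List.range N).filter (fun k => p k)) ∧
    (∀ t, t < N → p t = true →
      ∃ z, ((List.range N).filter (fun k => p k)).getLast? = some z ∧ t ≤ z ∧ p z = true ∧
        z < N ∧ ∀ s, z < s → s < N → p s = false) := by
  intro N
  induction N with
  | zero => exact ⟨List.isChain_nil, by omega⟩
  | succ N IH =>
    obtain ⟨IH1, IH2⟩ := IH
    have hsplit : (List.range (N+1)).filter (fun k => p k) =
        ((List.range N).filter (fun k => p k)) ++ ([N].filter (fun k => p k)) := by
      rw [List.range_succ, List.filter_append]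
    by_cases hpN : p N = true
    · have hfN : [N].filter (fun k => p k) = [N] := by simp [hpN]
      constructor
      · rw [hsplit, hfN]
        refine List.IsChain.append ?_ (List.isChain_singleton N) ?_
        · refine List.IsChain.imp ?_ IH1
          intro a b hab
          exact ⟨hab.1, hab.2.1, hab.2.2.1, by omega, hab.2.2.2.2⟩
        · intro x hx y hy
          simp only [List.head?_cons, Option.mem_def, Option.some.injEq] at hy
          subst hy
          have hxmem : x ∈ (List.range N).filter (fun k => p k) :=
            List.mem_of_mem_getLast? (hx ▸ rfl : x ∈ ((List.range N).filter (fun k => p k)).getLast?)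
          simp only [List.mem_filter, List.mem_range] at hxmem
          obtain ⟨z, hz, hxz, hpz, hzN, hbet⟩ := IH2 x hxmem.1 hxmem.2
          rw [hx] at hz
          simp only [Option.some.injEq] at hz
          subst hz
          exact ⟨hxmem.2, hpN, by omega, by omega, fun t h1 h2 => hbet t h1 h2⟩
      · intro t ht hpt
        refine ⟨N, ?_, ?_, hpN, by omega, by omega⟩
        · rw [hsplit, hfN, List.getLast?_append]
          rfl
        · by_cases htN : t = N
          · omega
          · have := IH2 t (by omega) hpt
            obtain ⟨z, hz, hxz, hpz, hzN, hbet⟩ := this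
            omega
    · have hfN : [N].filter (fun k => p k) = [] := by
        simp [hpN]
      have hLL : (List.range (N+1)).filter (fun k => p k) =
          (List.range N).filter (fun k => p k) := by
        rw [hsplit, hfN, List.append_nil]
      constructor
      · rw [hLL]
        refine List.IsChain.imp ?_ IH1
        intro a b hab
        exact ⟨hab.1, hab.2.1, hab.2.2.1, by omega, hab.2.2.2.2⟩
      · intro t ht hpt
        have htN : t ≠ N := by
          intro h; subst h; rw [hpt] at hpN; exact hpN rfl
        obtain ⟨z, hz, hxz, hpz, hzN, hbet⟩ := IH2 t (by omega) hpt
        refine ⟨z, by rw [hLL]; exact hz, hxz, hpz, by omega, ?_⟩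
        intro s h1 h2
        by_cases hsN : s = N
        · subst hsN
          simpa using hpN
        · exact hbet s h1 (by omega)

lemma chain_dist_bound {α : Type*} [MetricSpace α] {s : ℝ} (hs : 0 ≤ s) (l : List α)
    (hch : List.Chain' (fun x y => dist x y ≤ s) l) (d : α) :
    ∀ i j, i ≤ j → j < l.length → dist (l.getD i d) (l.getD j d) ≤ ((j : ℝ) - i) * s := by
  intro i j hij
  induction j with
  | zero =>
    intro hj
    have : i = 0 := by omega
    subst this
    simp
  | succ j IHj =>
    intro hj
    by_cases hij' : i = j + 1
    · subst hij'
      simp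
    · have hij2 : i ≤ j := by omega
      have hjlen : j < l.length := by omega
      have step : dist (l.getD j d) (l.getD (j+1) d) ≤ s := by
        have := List.isChain_iff_getElem.1 hch j (by omega)
        have h1 : l.getD j d = l.get ⟨j, hjlen⟩ := by
          rw [List.getD_eq_getElem?_getD, List.getElem?_eq_getElem hjlen]
          simp
        have h2 : l.getD (j+1) d = l.get ⟨j+1, hj⟩ := by
          rw [List.getD_eq_getElem?_getD, List.getElem?_eq_getElem hj]
          simp
        rw [h1, h2]
        exact this
      have tri : dist (l.getD i d) (l.getD (j+1) d) ≤
          dist (l.getD i d) (l.getD j d) + dist (l.getD j d) (l.getD (j+1) d) :=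
        dist_triangle _ _ _
      have IH' := IHj hij2 hjlen
      have hcast : ((j : ℝ) + 1 - i) = ((j : ℝ) - i) + 1 := by ring
      push_cast
      rw [hcast]
      linarith


lemma class_bt (w : ℝ) (hw : 0 ≤ w) (l : List α) (hnd : l.Nodup)
    (hch : List.Chain' (fun x y => dist x y ≤ 3*w) l) (d0 : α) (q : ℕ → Bool)
    (hflip : ∀ m, m % 2 = 0 → m + 1 < l.length → q (m+1) = !q m)
    (hne : ∃ k, k < l.length ∧ q k = true) :
    btCost (((List.range l.length).filter (fun k => q k)).map (fun k => l.getD k d0)).toFinset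
      ≤ 9 * w := by
  classical
  set N := l.length with hN
  set rp : List ℕ := (List.range N).filter (fun k => q k) with hrp
  set xf : ℕ → α := fun k => l.getD k d0 with hxf
  have hrpmem : ∀ k ∈ rp, k < N ∧ q k = true := by
    intro k hk
    rw [hrp] at hk
    simp only [List.mem_filter, List.mem_range] at hk
    exact hk
  have hrpnd : rp.Nodup := List.nodup_range.filter _
  have hrlne : rp.map xf ≠ [] := by
    obtain ⟨k, hk1, hk2⟩ := hne
    have hkrp : k ∈ rp := by
      rw [hrp]; simp only [List.mem_filter, List.mem_range]; exact ⟨hk1, hk2⟩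
    intro hcon
    rw [List.map_eq_nil_iff] at hcon
    rw [hcon] at hkrp
    simp at hkrp
  have hrlnd : (rp.map xf).Nodup := by
    refine List.Nodup.map_on ?_ hrpnd
    intro k1 hk1 k2 hk2 heq
    have h1 := (hrpmem k1 hk1).1
    have h2 := (hrpmem k2 hk2).1
    simp only [hxf] at heq
    rw [List.getD_eq_getElem?_getD, List.getElem?_eq_getElem h1] at heq
    rw [List.getD_eq_getElem?_getD, List.getElem?_eq_getElem h2] at heq
    simp only [Option.getD_some] at heq
    exact (List.Nodup.getElem_inj_iff hnd).1 heq
  have hgap : ∀ a b : ℕ, q a = true → q b = true → a < b → b < N →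
      (∀ t, a < t → t < b → q t = false) → b ≤ a + 3 := by
    intro a b _ _ hab hbN hbet
    by_contra hcon
    push_neg at hcon
    set m := if (a+1) % 2 = 0 then a+1 else a+2 with hm
    have hm2 : m % 2 = 0 := by rw [hm]; split <;> omega
    have hmr1 : a < m := by rw [hm]; split <;> omega
    have hmr2 : m + 1 < b := by rw [hm]; split <;> omega
    have h1 : q m = false := hbet m hmr1 (by omega)
    have h2 : q (m+1) = false := hbet (m+1) (by omega) hmr2
    have h3 := hflip m hm2 (by omega)
    rw [h1, h2] at h3
    simp at h3
  have hchain := (filter_range_props q N).1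
  have hrlch : List.Chain' (fun x y => dist x y ≤ 9*w) (rp.map xf) := by
    simp only [List.Chain']
    rw [List.isChain_map]
    refine List.IsChain.imp ?_ hchain
    intro a b hab
    obtain ⟨hqa, hqb, hab', hbN, hbet⟩ := hab
    have hgap' : b ≤ a + 3 := hgap a b hqa hqb hab' hbN hbet
    have hdist := chain_dist_bound (by linarith : (0:ℝ) ≤ 3*w) l hch d0 a b (by omega) (by omega)
    have hle : ((b:ℝ) - a) ≤ 3 := by
      have hc : (b:ℝ) ≤ (a:ℝ) + 3 := by exact_mod_cast hgap'
      linarith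
    have hnn : (0:ℝ) ≤ (b:ℝ) - a := by
      have : (a:ℝ) ≤ b := by exact_mod_cast Nat.le_of_lt hab'
      linarith
    calc dist (xf a) (xf b) ≤ ((b:ℝ) - a) * (3*w) := hdist
    _ ≤ 3 * (3*w) := by nlinarith
    _ = 9 * w := by ring
  exact btCost_le_of_chain (rp.map xf) hrlne hrlnd (9*w) (by linarith) hrlch

/-- `S` consists of `n ≥ 1` pairs `{pts (i, false), pts (i, true)}`. Let `T`
be a minimum spanning tree of `S` (minimizing total edge length) and `h` a maximum-weight
edge of `T`. Then there exists a feasible coloring `S = R ∪ B` with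
`max (btCost R) (btCost B) ≤ 9 · dist h.1 h.2`. -/
theorem bottleneck_nine_approx_coloring
    (n : ℕ) (hn : 1 ≤ n)
    (pts : Fin n × Bool → α) (hinj : Function.Injective pts)
    (S : Finset α) (hS : S = Finset.image pts Finset.univ)
    (T : Finset (α × α)) (hT : IsSpanningTreeOn S T)
    (hTmin : ∀ E : Finset (α × α), IsSpanningTreeOn S E →
      (∑ e ∈ T, dist e.1 e.2) ≤ ∑ e ∈ E, dist e.1 e.2)
    (h : α × α) (hh : h ∈ T) (hmax : ∀ e ∈ T, dist e.1 e.2 ≤ dist h.1 h.2) :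
    ∃ σ : Fin n → Bool,
      max (btCost (Finset.image (fun i => pts (i, σ i)) Finset.univ))
          (btCost (Finset.image (fun i => pts (i, !(σ i))) Finset.univ)) ≤
        9 * dist h.1 h.2 := by
  classical
  have hw0 : 0 ≤ dist h.1 h.2 := dist_nonneg
  set w : ℝ := dist h.1 h.2 with hwdef
  have hmemS : ∀ p, pts p ∈ S := by
    intro p; rw [hS]; exact Finset.mem_image_of_mem _ (Finset.mem_univ p)
  have hScard : S.card = 2 * n := by
    rw [hS, Finset.card_image_of_injective _ hinj, Finset.card_univ]
    simp only [Fintype.card_prod, Fintype.card_bool, Fintype.card_fin]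
    omega
  have hSconn : ∀ x ∈ S, ∀ y ∈ S, connw w S x y := by
    intro x hx y hy
    have h0 : Relation.ReflTransGen (fun a b => (a, b) ∈ T ∨ (b, a) ∈ T) x y := hT.2.2 x hx y hy
    refine Relation.ReflTransGen.mono ?_ _ _ h0
    intro u v huv
    rcases huv with he | he
    · exact ⟨(hT.1 _ he).1, (hT.1 _ he).2, hmax _ he⟩
    · refine ⟨(hT.1 _ he).2, (hT.1 _ he).1, ?_⟩
      rw [dist_comm]
      exact hmax _ he
  set i0 : Fin n := ⟨0, hn⟩ with hi0
  have hab : pts (i0, false) ≠ pts (i0, true) := by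
    intro hEq
    have := hinj hEq
    simp at this
  obtain ⟨l, hlnd, hltf, hlhd, hllast, hlch, _⟩ :=
    sekanina hw0 S.card S rfl (pts (i0, false)) (pts (i0, true)) (hmemS _) (hmemS _) hab hSconn
  set N := 2 * n with hN
  have hllen : l.length = N := by rw [← List.toFinset_card_of_nodup hlnd, hltf, hScard]
  have hmem_l : ∀ p : Fin n × Bool, pts p ∈ l := by
    intro p; rw [← List.mem_toFinset, hltf]; exact hmemS p
  set idx : Fin n × Bool → Fin N := fun p => ⟨l.idxOf (pts p), by
    rw [← hllen]; exact List.idxOf_lt_length_iff.2 (hmem_l p)⟩ with hidxdef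
  set xf : ℕ → α := fun k => l.getD k (pts (i0, false)) with hxf
  have hxfidx : ∀ p, xf ((idx p : Fin N) : ℕ) = pts p := by
    intro p
    have hlt : l.idxOf (pts p) < l.length := List.idxOf_lt_length_iff.2 (hmem_l p)
    simp only [hxf, hidxdef]
    rw [List.getD_eq_getElem?_getD, List.getElem?_eq_getElem hlt]
    simp
  have hidxinj : Function.Injective idx := by
    intro p q hpq
    have h1 : xf ((idx p : Fin N) : ℕ) = xf ((idx q : Fin N) : ℕ) := by rw [hpq]
    rw [hxfidx, hxfidx] at h1
    exact hinj h1
  have hidxbij : Function.Bijective idx := by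
    rw [Fintype.bijective_iff_injective_and_card]
    refine ⟨hidxinj, ?_⟩
    simp only [Fintype.card_prod, Fintype.card_bool, Fintype.card_fin]
    omega
  set E : (Fin n × Bool) ≃ Fin N := Equiv.ofBijective idx hidxbij with hE
  have hxfE : ∀ p, xf ((E p : Fin N) : ℕ) = pts p := hxfidx
  set sw : Equiv.Perm (Fin n × Bool) := Function.Involutive.toPerm (fun p => (p.1, !p.2))
    (fun p => by simp) with hsw
  set μ : Equiv.Perm (Fin N) := E.permCongr sw with hμ
  have hμapp : ∀ p, μ (E p) = E (p.1, !p.2) := by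
    intro p
    simp [hμ, Equiv.permCongr_apply, hsw, Function.Involutive.coe_toPerm]
    rfl
  have hμ2 : μ * μ = 1 := by
    ext x
    simp [hμ, Equiv.permCongr_apply, hsw, Equiv.Perm.mul_apply,
      Function.Involutive.coe_toPerm]
    simp [Function.Involutive.toPerm]
  have hμf : ∀ x, μ x ≠ x := by
    intro x hx
    have h1 : μ (E (E.symm x)) = E (E.symm x) := by rw [Equiv.apply_symm_apply]; exact hx
    rw [hμapp] at h1
    have h2 := E.injective h1
    have h3 : (!(E.symm x).2) = (E.symm x).2 := congrArg Prod.snd h2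
    cases hb : (E.symm x).2 <;> rw [hb] at h3 <;> simp at h3
  set πf : ℕ → ℕ := fun k => if k % 2 = 0 then k + 1 else k - 1 with hπfdef
  have hπflt : ∀ k : Fin N, πf k.val < N := by
    intro k
    have hk := k.isLt
    simp only [hπfdef]
    split <;> omega
  set π : Equiv.Perm (Fin N) := Function.Involutive.toPerm
    (fun k => ⟨πf k.val, hπflt k⟩) (fun k => by
      apply Fin.ext
      simp only [hπfdef]
      split <;> split <;> omega) with hπ
  have hπapp : ∀ k : Fin N, (π k : ℕ) = πf k.val := by
    intro k
    rw [hπ]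
    rfl
  have hπ2 : π * π = 1 := by
    ext x
    simp only [Equiv.Perm.mul_apply, Equiv.Perm.coe_one, id_eq]
    rw [hπapp (π x), hπapp x]
    simp only [hπfdef]
    split <;> split <;> omega
  have hπfp : ∀ x : Fin N, π x ≠ x := by
    intro x hx
    have h1 : (π x : ℕ) = x.val := congrArg Fin.val hx
    rw [hπapp] at h1
    simp only [hπfdef] at h1
    revert h1
    split <;> omega
  obtain ⟨c, hcμ, hcπ⟩ := perm_two_involutions_coloring μ π hμ2 hπ2 hμf hπfp
  set σ : Fin n → Bool := fun i => if c (E (i, true)) = true then true else false with hσ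
  have hredpos : ∀ i, c (E (i, σ i)) = true := by
    intro i
    by_cases hci : c (E (i, true)) = true
    · have : σ i = true := by rw [hσ]; simp [hci]
      rw [this]; exact hci
    · have hσi : σ i = false := by rw [hσ]; simp [hci]
      rw [hσi]
      have h1 : E ((i : Fin n), false) = μ (E (i, true)) := (hμapp (i, true)).symm
      rw [h1, hcμ]
      simp only [Bool.not_eq_true] at hci
      rw [hci]
      rfl
  have hbluepos : ∀ i, c (E (i, !σ i)) = false := by
    intro i
    have h1 : E ((i : Fin n), !σ i) = μ (E (i, σ i)) := (hμapp (i, σ i)).symm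
    rw [h1, hcμ, hredpos i]
    rfl
  set cc : ℕ → Bool := fun k => if hk : k < N then c ⟨k, hk⟩ else false with hcc
  have hccE : ∀ p, cc ((E p : Fin N) : ℕ) = c (E p) := by
    intro p
    rw [hcc]
    simp only
    rw [dif_pos (E p).isLt]
  have hflip : ∀ m, m % 2 = 0 → m + 1 < l.length → cc (m+1) = !cc m := by
    intro m hm2 hmlt
    rw [hllen] at hmlt
    have hmlt' : m < N := by omega
    have hπm : π ⟨m, hmlt'⟩ = ⟨m+1, hmlt⟩ := by
      apply Fin.ext
      rw [hπapp]
      simp only [hπfdef, hm2]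
      simp
    have hcp := hcπ ⟨m, hmlt'⟩
    rw [hπm] at hcp
    rw [hcc]
    simp only
    rw [dif_pos hmlt, dif_pos hmlt']
    exact hcp
  have hflip' : ∀ m, m % 2 = 0 → m + 1 < l.length → (!cc (m+1)) = !(!cc m) := by
    intro m hm2 hmlt
    rw [hflip m hm2 hmlt]
  -- red class equality
  have hclass : ∀ b0 : Bool,
      Finset.image (fun i => pts (i, if b0 then σ i else !σ i)) Finset.univ =
      (((List.range l.length).filter (fun k => if b0 then cc k else !cc k)).map xf).toFinset := by
    intro b0
    ext x
    simp only [Finset.mem_image, Finset.mem_univ, true_and, List.mem_toFinset, List.mem_map,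
      List.mem_filter, List.mem_range]
    constructor
    · rintro ⟨i, rfl⟩
      refine ⟨((E (i, if b0 then σ i else !σ i) : Fin N) : ℕ), ⟨?_, ?_⟩, ?_⟩
      · rw [hllen]; exact (E _).isLt
      · cases b0
        · simp only [Bool.false_eq_true, if_false]
          rw [hccE]
          rw [hbluepos i]
          rfl
        · simp only [if_true]
          rw [hccE]
          exact hredpos i
      · exact hxfE _
    · rintro ⟨k, ⟨hk1, hk2⟩, rfl⟩
      rw [hllen] at hk1
      set p := E.symm ⟨k, hk1⟩ with hp
      have hEp : E p = ⟨k, hk1⟩ := by rw [hp, Equiv.apply_symm_apply]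
      have hxfk : xf k = pts p := by
        have := hxfE p
        rw [hEp] at this
        exact this
      have hcp : cc k = c (E p) := by
        rw [hEp, hcc]
        simp only
        rw [dif_pos hk1]
      refine ⟨p.1, ?_⟩
      cases b0
      · simp only [Bool.false_eq_true, if_false] at hk2 ⊢
        have hcf : c (E p) = false := by
          rw [← hcp]
          cases hc2 : cc k
          · rfl
          · rw [hc2] at hk2; simp at hk2
        have hps : p.2 = !σ p.1 := by
          by_contra hne'
          have hps2 : p.2 = σ p.1 := by
            cases hσ1 : σ p.1 <;> cases hp2 : p.2 <;> simp_all
          have := hredpos p.1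
          rw [show ((p.1 : Fin n), σ p.1) = p from ?_] at this
          · rw [this] at hcf; simp at hcf
          · rw [← hps2]
        rw [hxfk]
        congr 1
        rw [← hps]
      · simp only [if_true] at hk2 ⊢
        have hcf : c (E p) = true := by rw [← hcp]; exact hk2
        have hps : p.2 = σ p.1 := by
          by_contra hne'
          have hps2 : p.2 = !σ p.1 := by
            cases hσ1 : σ p.1 <;> cases hp2 : p.2 <;> simp_all
          have := hbluepos p.1
          rw [show ((p.1 : Fin n), !σ p.1) = p from ?_] at this
          · rw [this] at hcf; simp at hcf
          · rw [← hps2]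
        rw [hxfk]
        congr 1
        rw [← hps]
  have hNeK : ∃ k, k < l.length ∧ cc k = true := by
    refine ⟨((E (i0, σ i0) : Fin N) : ℕ), ?_, ?_⟩
    · rw [hllen]; exact (E _).isLt
    · rw [hccE]; exact hredpos i0
  have hNeK' : ∃ k, k < l.length ∧ (!cc k) = true := by
    refine ⟨((E (i0, !σ i0) : Fin N) : ℕ), ?_, ?_⟩
    · rw [hllen]; exact (E _).isLt
    · rw [hccE, hbluepos i0]
      rfl
  refine ⟨σ, max_le ?_ ?_⟩
  · have h1 := hclass true
    simp only [if_true] at h1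
    rw [h1]
    exact class_bt w hw0 l hlnd hlch (pts (i0, false)) cc hflip hNeK
  · have h1 := hclass false
    simp only [Bool.false_eq_true, if_false] at h1
    rw [h1]
    exact class_bt w hw0 l hlnd hlch (pts (i0, false)) (fun k => !cc k) hflip' hNeK'
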